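/- For every prime p and integer r ≥ 1, with n = p^r, the product of Γ(k/n) over all integers k with 1 ≤ k ≤ n and gcd(k,n) = 1 equals (2π)^(φ(n)/2) / √p. -/

import Mathlib

open Real Finset Polynomial

lemma prod_one_sub_zeta_pow (n : ℕ) (hn : 1 ≤ n) :
    ∏ k ∈ Finset.Ico 1 n, ((1 : ℂ) - Complex.exp (2 * π * Complex.I / n) ^ k) = n := by
  set ζ : ℂ := Complex.exp (2 * π * Complex.I / n) with hζdef
  have hζ : IsPrimitiveRoot ζ n := Complex.isPrimitiveRoot_exp n (by omega)
  have hpos : 0 < n := hn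
  have h1 : (X ^ n - 1 : ℂ[X]) = ∏ k ∈ Finset.range n, (X - C (ζ ^ k)) := by
    rw [X_pow_sub_one_eq_prod hpos hζ]
    refine (Finset.prod_nbij (fun k => ζ ^ k) (fun k hk => ?_) (fun a ha b hb h => ?_)
      (fun x hx => ?_) (fun k hk => rfl)).symm
    · rw [Polynomial.mem_nthRootsFinset hpos, ← pow_mul, mul_comm, pow_mul, hζ.pow_eq_one,
        one_pow]
    · exact hζ.pow_inj (Finset.mem_range.mp (Finset.mem_coe.mp ha))
        (Finset.mem_range.mp (Finset.mem_coe.mp hb)) h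
    · have hx1 : (x : ℂ) ^ n = 1 := (Polynomial.mem_nthRootsFinset hpos (1:ℂ)).mp hx
      haveI : NeZero n := ⟨by omega⟩
      obtain ⟨i, hi, rfl⟩ := hζ.eq_pow_of_pow_eq_one hx1
      exact ⟨i, by simpa using hi, rfl⟩
  have hins : Finset.range n = insert 0 (Finset.Ico 1 n) := by
    ext k; simp [Finset.mem_range, Finset.mem_Ico]; omega
  have h2 : ((X : ℂ[X]) - 1) * ∏ k ∈ Finset.Ico 1 n, (X - C (ζ ^ k)) =
      ((X : ℂ[X]) - 1) * ∑ i ∈ Finset.range n, X ^ i := by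
    have hg : ((X : ℂ[X]) - 1) * ∑ i ∈ Finset.range n, X ^ i = X ^ n - 1 := by
      rw [mul_comm, geom_sum_mul]
    rw [hg, h1, hins, Finset.prod_insert (by simp)]
    simp
  have h3 : (∏ k ∈ Finset.Ico 1 n, ((X:ℂ[X]) - C (ζ ^ k))) = ∑ i ∈ Finset.range n, X ^ i :=
    mul_left_cancel₀ (by simpa using (Polynomial.X_sub_C_ne_zero (1:ℂ))) h2
  have := congrArg (Polynomial.eval 1) h3
  simpa [Polynomial.eval_prod] using this

lemma abs_one_sub_exp (θ : ℝ) (h0 : 0 ≤ θ) (h2 : θ ≤ 2 * π) :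
    ‖1 - Complex.exp (θ * Complex.I)‖ = 2 * Real.sin (θ / 2) := by
  have hre : (1 - Complex.exp (θ * Complex.I)).re = 1 - Real.cos θ := by
    simp [Complex.sub_re, Complex.exp_ofReal_mul_I_re]
  have him : (1 - Complex.exp (θ * Complex.I)).im = -Real.sin θ := by
    simp [Complex.sub_im, Complex.exp_ofReal_mul_I_im]
  have hnn : 0 ≤ Real.sin (θ / 2) :=
    Real.sin_nonneg_of_nonneg_of_le_pi (by linarith) (by linarith)
  have hc1 : Real.cos θ ≤ 1 := Real.cos_le_one θ
  have hsq : Real.sin (θ / 2) ^ 2 = (1 - Real.cos θ) / 2 := by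
    rw [Real.sin_half_eq_sqrt h0 h2, Real.sq_sqrt (by linarith)]
  rw [Complex.norm_def, Complex.normSq_apply, hre, him]
  rw [show (1 - Real.cos θ) * (1 - Real.cos θ) + -Real.sin θ * -Real.sin θ =
      (2 * Real.sin (θ / 2)) ^ 2 by
    have hpy := Real.sin_sq_add_cos_sq θ
    nlinarith [hsq]]
  exact Real.sqrt_sq (by linarith)

lemma prod_two_sin (n : ℕ) (hn : 1 ≤ n) :
    ∏ k ∈ Finset.Ico 1 n, (2 * Real.sin (k * π / n)) = n := by
  have h1 := prod_one_sub_zeta_pow n hn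
  have h2 := congrArg (‖·‖) h1
  rw [norm_prod] at h2
  have h3 : ∀ k ∈ Finset.Ico 1 n,
      ‖1 - Complex.exp (2 * π * Complex.I / n) ^ k‖ = 2 * Real.sin (k * π / n) := by
    intro k hk
    rw [Finset.mem_Ico] at hk
    have hn0 : (n : ℝ) ≠ 0 := by positivity
    have hexp : Complex.exp (2 * π * Complex.I / n) ^ k
        = Complex.exp ((2 * π * k / n : ℝ) * Complex.I) := by
      rw [← Complex.exp_nat_mul]
      push_cast
      ring_nf
    rw [hexp, abs_one_sub_exp]
    · congr 1
      field_simp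
    · positivity
    · rw [div_le_iff₀ (by positivity)]
      have : (k : ℝ) ≤ n := by exact_mod_cast hk.2.le
      nlinarith [Real.pi_pos]
  rw [Finset.prod_congr rfl h3] at h2
  simpa using h2

lemma gamma_prod_all (m : ℕ) (hm : 1 ≤ m) :
    ∏ k ∈ Finset.Ico 1 m, Real.Gamma ((k : ℝ) / m) =
      Real.sqrt ((2 * π) ^ (m - 1) / m) := by
  have hm0 : (m : ℝ) ≠ 0 := by positivity
  set P := ∏ k ∈ Finset.Ico 1 m, Real.Gamma ((k : ℝ) / m) with hP
  have hpos : 0 < P := Finset.prod_pos fun k hk => by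
    rw [Finset.mem_Ico] at hk
    have : (0:ℝ) < k := by exact_mod_cast hk.1
    exact Real.Gamma_pos_of_pos (by positivity)
  -- reindex k ↦ m - k
  have hrefl : P = ∏ k ∈ Finset.Ico 1 m, Real.Gamma (1 - (k : ℝ) / m) := by
    rw [hP]
    refine Finset.prod_nbij' (fun k => m - k) (fun k => m - k) ?_ ?_ ?_ ?_ ?_
    · intro k hk; rw [Finset.mem_Ico] at hk ⊢; omega
    · intro k hk; rw [Finset.mem_Ico] at hk ⊢; omega
    · intro k hk; rw [Finset.mem_Ico] at hk; omega
    · intro k hk; rw [Finset.mem_Ico] at hk; omega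
    · intro k hk
      rw [Finset.mem_Ico] at hk
      congr 1
      have : ((m - k : ℕ) : ℝ) = (m : ℝ) - k := by
        push_cast [Nat.cast_sub hk.2.le]; ring
      rw [this]
      field_simp
      ring
  have hsq : P ^ 2 = (2 * π) ^ (m - 1) / m := by
    have : P ^ 2 = ∏ k ∈ Finset.Ico 1 m,
        (Real.Gamma ((k : ℝ) / m) * Real.Gamma (1 - (k : ℝ) / m)) := by
      rw [Finset.prod_mul_distrib, sq, ← hP, ← hrefl]
    rw [this]
    have hterm : ∀ k ∈ Finset.Ico 1 m,
        Real.Gamma ((k : ℝ) / m) * Real.Gamma (1 - (k : ℝ) / m)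
          = (2 * π) * (2 * Real.sin ((k : ℝ) * π / m))⁻¹ := by
      intro k hk
      rw [Finset.mem_Ico] at hk
      rw [Real.Gamma_mul_Gamma_one_sub]
      have hs : Real.sin (π * ((k : ℝ) / m)) = Real.sin ((k : ℝ) * π / m) := by
        ring_nf
      rw [hs]
      have hspos : 0 < Real.sin ((k : ℝ) * π / m) := by
        apply Real.sin_pos_of_pos_of_lt_pi
        · have : (0:ℝ) < k := by exact_mod_cast hk.1
          positivity
        · rw [div_lt_iff₀ (by positivity)]
          have h2 : (k : ℝ) < m := by exact_mod_cast hk.2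
          nlinarith [Real.pi_pos]
      field_simp
    rw [Finset.prod_congr rfl hterm, Finset.prod_mul_distrib, Finset.prod_const,
      Finset.prod_inv_distrib, prod_two_sin m hm, Nat.card_Ico, div_eq_mul_inv]
  rw [← hsq, Real.sqrt_sq hpos.le]

theorem gamma_prod_coprime_prime_pow (p r : ℕ) (hp : p.Prime) (hr : 1 ≤ r) (n : ℕ)
    (hn : n = p ^ r) :
    ∏ k ∈ (Finset.Icc 1 n).filter (fun k => Nat.gcd k n = 1),
        Real.Gamma ((k : ℝ) / n) =
      (2 * π) ^ ((n.totient : ℝ) / 2) / Real.sqrt p := by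
  have hp2 : 2 ≤ p := hp.two_le
  set m := p ^ (r - 1) with hm
  have hmpos : 1 ≤ m := Nat.one_le_pow _ _ (by omega)
  have hnm : n = p * m := by
    rw [hn, hm, ← pow_succ']
    congr 1
    omega
  have hn1 : 1 < n := by nlinarith
  have hmn : m < n := by nlinarith
  -- coprimality to p^r is not being divisible by p
  have hcop : ∀ k, (Nat.gcd k n = 1) ↔ ¬ p ∣ k := by
    intro k
    rw [hn]
    rw [show (Nat.gcd k (p ^ r) = 1) ↔ Nat.Coprime k (p ^ r) from Iff.rfl,
      Nat.coprime_pow_right_iff (by omega), Nat.coprime_comm, hp.coprime_iff_not_dvd]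
  -- replace Icc by Ico
  have hfeq : (Finset.Icc 1 n).filter (fun k => Nat.gcd k n = 1)
      = (Finset.Ico 1 n).filter (fun k => Nat.gcd k n = 1) := by
    ext k
    simp only [Finset.mem_filter, Finset.mem_Icc, Finset.mem_Ico]
    constructor
    · rintro ⟨⟨h1, h2⟩, h3⟩
      refine ⟨⟨h1, ?_⟩, h3⟩
      rcases Nat.lt_or_ge k n with h | h
      · exact h
      · exfalso
        have : k = n := le_antisymm h2 h
        rw [this, Nat.gcd_self] at h3
        omega
    · rintro ⟨⟨h1, h2⟩, h3⟩
      exact ⟨⟨h1, h2.le⟩, h3⟩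
  -- the non-coprime part of the product
  have hsub : ∏ k ∈ (Finset.Ico 1 n).filter (fun k => ¬ Nat.gcd k n = 1),
      Real.Gamma ((k : ℝ) / n) = ∏ j ∈ Finset.Ico 1 m, Real.Gamma ((j : ℝ) / m) := by
    refine (Finset.prod_nbij' (fun j => p * j) (fun k => k / p) ?_ ?_ ?_ ?_ ?_).symm
    · intro j hj
      rw [Finset.mem_Ico] at hj
      rw [Finset.mem_filter, Finset.mem_Ico, hcop, not_not]
      refine ⟨⟨by nlinarith, ?_⟩, Dvd.intro j rfl⟩
      rw [hnm]
      exact mul_lt_mul_of_pos_left hj.2 (by omega)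
    · intro k hk
      rw [Finset.mem_filter, Finset.mem_Ico, hcop, not_not] at hk
      obtain ⟨⟨h1, h2⟩, j, rfl⟩ := hk
      rw [Nat.mul_div_cancel_left _ (by omega : 0 < p), Finset.mem_Ico]
      constructor
      · by_contra h
        interval_cases j
        omega
      · rw [hnm] at h2
        exact lt_of_mul_lt_mul_left h2 (by omega)
    · intro j hj
      rw [Nat.mul_div_cancel_left _ (by omega : 0 < p)]
    · intro k hk
      rw [Finset.mem_filter, hcop, not_not] at hk
      exact Nat.mul_div_cancel' hk.2
    · intro j hj
      congr 1
      rw [hnm]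
      push_cast
      rw [mul_div_mul_left _ _ (by positivity : (p : ℝ) ≠ 0)]
  have hPn := gamma_prod_all n (by omega)
  have hPm := gamma_prod_all m hmpos
  have hsplit := Finset.prod_filter_mul_prod_filter_not (Finset.Ico 1 n)
    (fun k => Nat.gcd k n = 1) (fun k => Real.Gamma ((k : ℝ) / n))
  rw [hsub, hPm, hPn] at hsplit
  have hmR : (0:ℝ) < m := by exact_mod_cast hmpos
  have hsqm : (0:ℝ) < Real.sqrt ((2 * π) ^ (m - 1) / m) := by
    apply Real.sqrt_pos.mpr
    have := Real.pi_pos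
    positivity
  have hC : ∏ k ∈ (Finset.Ico 1 n).filter (fun k => Nat.gcd k n = 1),
      Real.Gamma ((k : ℝ) / n)
        = Real.sqrt ((2 * π) ^ (n - 1) / n) / Real.sqrt ((2 * π) ^ (m - 1) / m) := by
    rw [eq_div_iff hsqm.ne']
    exact hsplit
  rw [hfeq, hC]
  -- totient
  have hφ : n.totient = n - m := by
    rw [hn, Nat.totient_prime_pow hp (by omega), ← hm, mul_comm, tsub_mul, one_mul, ← hnm, ← hn]
  have h2π : (0:ℝ) < 2 * π := by positivity
  have hRHS : (2 * π) ^ ((n.totient : ℝ) / 2) = Real.sqrt ((2 * π) ^ (n - m)) := by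
    rw [hφ, Real.sqrt_eq_rpow, ← Real.rpow_natCast (2 * π) (n - m), ← Real.rpow_mul h2π.le]
    congr 1
    ring
  rw [hRHS, ← Real.sqrt_div (by positivity) _, ← Real.sqrt_div (by positivity) _]
  congr 1
  have hnR : (n : ℝ) = p * m := by exact_mod_cast hnm
  have hpow : (2 * π) ^ (n - 1) = (2 * π) ^ (n - m) * (2 * π) ^ (m - 1) := by
    rw [← pow_add]
    congr 1
    omega
  rw [hpow, hnR]
  have hpR : (0:ℝ) < p := by positivity
  field_simp
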